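/- Second-order stochastic dominance is equivalent to a dominance relation on the conditional-value-at-risk (average value at risk): Y dominates X in second order if and only if AV@R_α(−Y) ≤ AV@R_α(−X) for all α ∈ [0, 1), where AV@R_α(Z) = inf_{q ∈ ℝ} { q + (1/(1−α)) E[(Z − q)₊] }. -/

import Mathlib

open MeasureTheory

section Aux

variable {Ω : Type*} [MeasurableSpace Ω] {μ : Measure Ω} [IsProbabilityMeasure μ]

lemma intMax {Z : Ω → ℝ} (hZi : Integrable Z μ) (t : ℝ) :
    Integrable (fun ω => max (t - Z ω) 0) μ :=
  ((integrable_const t).sub hZi).pos_part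

/-- linear lower bound: `q - E Z ≤ E (q - Z)₊`. -/
lemma linLB {Z : Ω → ℝ} (hZi : Integrable Z μ) (q : ℝ) :
    q - ∫ ω, Z ω ∂μ ≤ ∫ ω, max (q - Z ω) 0 ∂μ := by
  have h1 : ∫ ω, (q - Z ω) ∂μ ≤ ∫ ω, max (q - Z ω) 0 ∂μ :=
    integral_mono ((integrable_const q).sub hZi) (intMax hZi q) fun ω => le_max_left _ _
  rwa [integral_sub (integrable_const q) hZi, integral_const, probReal_univ,
    smul_eq_mul, one_mul] at h1

/-- subgradient inequality for `F(s) = E (s - Z)₊` at `t` with slope `μ{Z ≤ t}`. -/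
lemma subgrad {Z : Ω → ℝ} (hZ : Measurable Z) (hZi : Integrable Z μ) (s t : ℝ) :
    (∫ ω, max (t - Z ω) 0 ∂μ) + (s - t) * (μ {ω | Z ω ≤ t}).toReal
      ≤ ∫ ω, max (s - Z ω) 0 ∂μ := by
  set A : Set Ω := {ω | Z ω ≤ t} with hA
  have hAm : MeasurableSet A := hZ measurableSet_Iic
  have hind : Integrable (A.indicator fun _ => s - t) μ :=
    (integrable_const (s - t)).indicator hAm
  have hpt : ∀ ω, max (t - Z ω) 0 + A.indicator (fun _ => s - t) ω ≤ max (s - Z ω) 0 := by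
    intro ω
    by_cases hω : Z ω ≤ t
    · rw [Set.indicator_of_mem (show ω ∈ A from hω)]
      have h1 : max (t - Z ω) 0 = t - Z ω := max_eq_left (by linarith)
      rw [h1]
      have : t - Z ω + (s - t) = s - Z ω := by ring
      rw [this]
      exact le_max_left _ _
    · rw [Set.indicator_of_notMem (show ω ∉ A from hω)]
      push_neg at hω
      have h1 : max (t - Z ω) 0 = 0 := max_eq_right (by linarith)
      rw [h1, add_zero]
      exact le_max_right _ _
  have h2 : ∫ ω, (max (t - Z ω) 0 + A.indicator (fun _ => s - t) ω) ∂μ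
      ≤ ∫ ω, max (s - Z ω) 0 ∂μ :=
    integral_mono ((intMax hZi t).add hind) (intMax hZi s) hpt
  rwa [integral_add (intMax hZi t) hind, integral_indicator_const _ hAm,
    smul_eq_mul, mul_comm] at h2

end Aux

/-- Second-order stochastic dominance of `Y` over `X` is equivalent to
`AV@R_α(−Y) ≤ AV@R_α(−X)` for all `α ∈ [0,1)`, where `AV@R` is given by the
Rockafellar–Uryasev formula. -/
theorem second_order_dominance_iff_avar
    {Ω : Type*} [MeasurableSpace Ω] (μ : Measure Ω) [IsProbabilityMeasure μ]
    (X Y : Ω → ℝ) (hX : Measurable X) (hY : Measurable Y)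
    (hXi : Integrable X μ) (hYi : Integrable Y μ)
    (avar : ℝ → (Ω → ℝ) → ℝ)
    (havar : ∀ (α : ℝ) (Z : Ω → ℝ),
      avar α Z = ⨅ q : ℝ, q + (1 - α)⁻¹ * ∫ ω, max (Z ω - q) 0 ∂μ) :
    (∀ t : ℝ, ∫ ω, max (t - Y ω) 0 ∂μ ≤ ∫ ω, max (t - X ω) 0 ∂μ) ↔
      (∀ α : ℝ, 0 ≤ α → α < 1 →
        avar α (fun ω => -Y ω) ≤ avar α (fun ω => -X ω)) := by
  have hrw : ∀ (Z : Ω → ℝ) (q : ℝ),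
      (∫ ω, max (-Z ω - q) 0 ∂μ) = ∫ ω, max (-q - Z ω) 0 ∂μ := by
    intro Z q; congr 1; funext ω; congr 1; ring
  -- lower bound on the infimand, for `c ≥ 1`
  have hbdd : ∀ {Z : Ω → ℝ}, Integrable Z μ → ∀ {c : ℝ}, 1 ≤ c → ∀ q : ℝ,
      -∫ ω, Z ω ∂μ ≤ q + c * ∫ ω, max (-q - Z ω) 0 ∂μ := by
    intro Z hZi c hc q
    have h0 : (0:ℝ) ≤ ∫ ω, max (-q - Z ω) 0 ∂μ :=
      integral_nonneg fun ω => le_max_right _ _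
    have h1 := linLB (μ := μ) hZi (-q)
    nlinarith
  constructor
  · intro h α hα0 hα1
    have hc : 1 ≤ (1 - α)⁻¹ := by
      rw [le_inv_comm₀ one_pos (by linarith)]
      simp; linarith
    rw [havar, havar]
    simp only [hrw]
    refine ciInf_mono ⟨-∫ ω, Y ω ∂μ, ?_⟩ ?_
    · rintro x ⟨q, rfl⟩
      exact hbdd hYi hc q
    · intro q
      have := h (-q)
      have hc0 : (0:ℝ) ≤ (1 - α)⁻¹ := by linarith
      nlinarith
  · intro h t
    set β := (μ {ω | Y ω ≤ t}).toReal with hβ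
    have hβ1 : β ≤ 1 := by
      rw [hβ]; exact ENNReal.toReal_le_of_le_ofReal one_pos.le (by simpa using prob_le_one)
    by_cases hβ0 : β = 0
    · -- μ {Y ≤ t} = 0, so E (t - Y)₊ = 0
      have hμ0 : μ {ω | Y ω ≤ t} = 0 := by
        have := ENNReal.toReal_eq_zero_iff _ |>.mp hβ0
        rcases this with h0 | htop
        · exact h0
        · exact absurd htop (measure_ne_top μ _)
      have hae : ∀ᵐ ω ∂μ, max (t - Y ω) 0 = 0 := by
        have : ∀ᵐ ω ∂μ, ¬ (Y ω ≤ t) := by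
          rw [ae_iff]; simpa using hμ0
        filter_upwards [this] with ω hω
        push_neg at hω
        exact max_eq_right (by linarith)
      have : ∫ ω, max (t - Y ω) 0 ∂μ = 0 := by
        rw [integral_congr_ae hae, integral_zero]
      rw [this]
      exact integral_nonneg fun ω => le_max_right _ _
    · have hβpos : 0 < β := lt_of_le_of_ne (ENNReal.toReal_nonneg) (Ne.symm hβ0)
      have hc1 : 1 ≤ β⁻¹ := by
        rw [le_inv_comm₀ one_pos hβpos]; simpa using hβ1
      have hA := h (1 - β) (by linarith) (by linarith)
      rw [havar, havar] at hA
      simp only [hrw, sub_sub_cancel] at hA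
      -- upper bound for X side
      have hub : (⨅ q : ℝ, q + β⁻¹ * ∫ ω, max (-q - X ω) 0 ∂μ)
          ≤ -t + β⁻¹ * ∫ ω, max (t - X ω) 0 ∂μ := by
        have := ciInf_le (f := fun q : ℝ => q + β⁻¹ * ∫ ω, max (-q - X ω) 0 ∂μ)
          ⟨-∫ ω, X ω ∂μ, by rintro x ⟨q, rfl⟩; exact hbdd hXi hc1 q⟩ (-t)
        simpa using this
      -- lower bound for Y side
      have hlb : -t + β⁻¹ * ∫ ω, max (t - Y ω) 0 ∂μ
          ≤ ⨅ q : ℝ, q + β⁻¹ * ∫ ω, max (-q - Y ω) 0 ∂μ := by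
        refine le_ciInf fun q => ?_
        have hsg := subgrad (μ := μ) hY hYi (-q) t
        rw [← hβ] at hsg
        have hinv : β⁻¹ * β = 1 := inv_mul_cancel₀ hβ0
        have hc0 : (0:ℝ) ≤ β⁻¹ := by linarith
        have h2 := mul_le_mul_of_nonneg_left hsg hc0
        rw [mul_add, mul_comm (-q - t) β, ← mul_assoc, hinv, one_mul] at h2
        linarith
      have hfin : -t + β⁻¹ * ∫ ω, max (t - Y ω) 0 ∂μ
          ≤ -t + β⁻¹ * ∫ ω, max (t - X ω) 0 ∂μ :=
        le_trans hlb (le_trans hA hub)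
      have hpos : (0:ℝ) < β⁻¹ := by linarith
      have := le_of_mul_le_mul_left (by linarith : β⁻¹ * ∫ ω, max (t - Y ω) 0 ∂μ ≤ β⁻¹ * ∫ ω, max (t - X ω) 0 ∂μ) hpos
      exact this
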